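/- In a commuting cube of sets in which the right face is a pullback, the bottom and left faces are covering squares, and the back face is a collection square, the front face is also a collection square. -/
import Mathlib


/-- A covering square (right edge `f`, bottom `p`, left `g`, top `q`):
the square commutes, `p` is a surjection and the induced map `D → B ×_A C`
is a surjection. -/
def IsCoveringSq {A B C D : Type} (f : B → A) (p : C → A) (g : D → C) (q : D → B) : Prop :=
  (∀ d, f (q d) = p (g d)) ∧ Function.Surjective p ∧
  (∀ (b : B) (c : C), f b = p c → ∃ d, q d = b ∧ g d = c)

/-- The additional collection condition of a collection square. -/
def CollCond {A B C D : Type} (f : B → A) (p : C → A) (g : D → C) (q : D → B) : Prop :=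
  ∀ (a : A) (E : Type) (e : E → {b : B // f b = a}), Function.Surjective e →
    ∃ c : C, p c = a ∧ ∃ h : {d : D // g d = c} → E,
      ∀ d : {d : D // g d = c}, ((e (h d)) : {b : B // f b = a}).1 = q d.1

/-- in a commuting cube of sets whose right face is a pullback,
whose bottom and left faces are covering squares and whose back face is a
collection square, the front face is a collection square.

Back face: `qB : D → B` over `pB : C → A` (left `gB`, right `fB`);
front face: `qF : H → F` over `pF : G → E` (left `gF`, right `fF`);
connecting maps `sD : H → D`, `sB : F → B`, `sC : G → C`, `sA : E → A`. -/
theorem stmt_7 {A B C D E F G H : Type}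
    (fB : B → A) (pB : C → A) (gB : D → C) (qB : D → B)
    (fF : F → E) (pF : G → E) (gF : H → G) (qF : H → F)
    (sD : H → D) (sB : F → B) (sC : G → C) (sA : E → A)
    -- the cube commutes:
    (htop : ∀ h : H, sB (qF h) = qB (sD h))
    (hfront : ∀ h : H, fF (qF h) = pF (gF h))
    -- the right face is a pullback:
    (hrIsComm : ∀ x : F, fB (sB x) = sA (fF x))
    (hrIsPb : ∀ (b : B) (e : E), fB b = sA e → ∃! x : F, sB x = b ∧ fF x = e)
    -- the bottom face is a covering square:
    (hbot : IsCoveringSq pB sA pF sC)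
    -- the left face is a covering square:
    (hleft : IsCoveringSq gB sC gF sD)
    -- the back face is a collection square:
    (hback1 : IsCoveringSq fB pB gB qB) (hback2 : CollCond fB pB gB qB) :
    IsCoveringSq fF pF gF qF ∧ CollCond fF pF gF qF := by
  obtain ⟨hbotc, hsA, hbotp⟩ := hbot
  obtain ⟨hleftc, hsC, hleftp⟩ := hleft
  obtain ⟨hbackc, hpB, hbackp⟩ := hback1
  constructor
  · refine ⟨hfront, ?_, ?_⟩
    · intro e0
      obtain ⟨c, hc⟩ := hpB (sA e0)
      obtain ⟨g', _, hg2⟩ := hbotp c e0 hc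
      exact ⟨g', hg2⟩
    · intro x g' hxg
      have h1 : fB (sB x) = pB (sC g') := by
        rw [hrIsComm, hxg, hbotc]
      obtain ⟨d, hd1, hd2⟩ := hbackp _ _ h1
      obtain ⟨h, hh1, hh2⟩ := hleftp d g' (by rw [hd2])
      refine ⟨h, ?_, hh2⟩
      have hfb : fB (sB x) = sA (fF x) := hrIsComm x
      obtain ⟨x', _, hxuniq⟩ := hrIsPb (sB x) (fF x) hfb
      have e1 : qF h = x' := by
        apply hxuniq
        constructor
        · rw [htop, hh1, hd1]
        · rw [hfront, hh2, ← hxg]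
      have e2 : x = x' := hxuniq x ⟨rfl, rfl⟩
      rw [e1, e2]
  · intro e0 Ety eMap hsurj
    set a := sA e0 with ha
    -- map {x // fF x = e0} → {b // fB b = a}
    have hφ : ∀ x : {x : F // fF x = e0}, fB (sB x.1) = a := by
      intro x; rw [hrIsComm, x.2]
    let ψ : Ety → {b : B // fB b = a} := fun t => ⟨sB (eMap t).1, hφ _⟩
    have hψsurj : Function.Surjective ψ := by
      intro b
      obtain ⟨x, ⟨hx1, hx2⟩, _⟩ := hrIsPb b.1 e0 b.2
      obtain ⟨t, ht⟩ := hsurj ⟨x, hx2⟩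
      exact ⟨t, Subtype.ext (by simp [ψ, ht, hx1])⟩
    obtain ⟨c, hca, h0, hh0⟩ := hback2 a Ety ψ hψsurj
    obtain ⟨g', hg1, hg2⟩ := hbotp c e0 (by rw [hca])
    refine ⟨g', hg2, ?_⟩
    have key : ∀ h1 : {h : H // gF h = g'}, gB (sD h1.1) = c := by
      intro h1; rw [hleftc, h1.2, hg1]
    refine ⟨fun h1 => h0 ⟨sD h1.1, key h1⟩, ?_⟩
    intro h1
    have hq := hh0 ⟨sD h1.1, key h1⟩
    -- hq : sB (eMap (h0 ⟨sD h1.1, _⟩)).1 = qB (sD h1.1)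
    have hfbb : fB (sB (qF h1.1)) = sA e0 := by
      rw [hrIsComm, hfront, h1.2, hg2]
    obtain ⟨x', _, hxuniq⟩ := hrIsPb (sB (qF h1.1)) e0 hfbb
    have e1 : (eMap (h0 ⟨sD h1.1, key h1⟩)).1 = x' := by
      apply hxuniq
      refine ⟨?_, (eMap _).2⟩
      have : sB (eMap (h0 ⟨sD h1.1, key h1⟩)).1 = qB (sD h1.1) := hq
      rw [this, ← htop]
    have e2 : qF h1.1 = x' := by
      apply hxuniq
      exact ⟨rfl, by rw [hfront, h1.2, hg2]⟩
    rw [e1, e2]
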